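/- arXiv:1502.06094 — 2 statements merged into one kernel-verified Lean document; each statement's English description precedes it below -/
import Mathlib

section
/- Let I be partitioned into disjoint sets σ₁ and σ₂ with |σ₁| ≥ 2 and |σ₂| ≥ 2, and let B be the monotone-regular behavior with single output neuron x defined by the language L = {⟨σ₁⟩, ⟨σ₂⟩}: x ∈ B(α) iff α embeds ⟨σ₁⟩ or ⟨σ₂⟩. Then no positive neural network implements B with zero delay. -/
open scoped Classical

/-- A positive neural network with input neurons `I`, output neurons `O` and auxiliary
neurons `A`. Connections go from `I ⊕ A` (presynaptic) to `O ⊕ A` (postsynaptic); all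
weights are in `[0,1]`, weight `0` represents a missing connection, and there are no
self-connections on auxiliary neurons. -/
structure PNN (I O A : Type) [Fintype I] [Fintype O] [Fintype A] where
  W : (I ⊕ A) → (O ⊕ A) → ℝ
  nonneg : ∀ z y, 0 ≤ W z y
  le_one : ∀ z y, W z y ≤ 1
  no_self : ∀ a : A, W (Sum.inr a) (Sum.inr a) = 0

variable {I O A : Type} [Fintype I] [Fintype O] [Fintype A]

/-- Total incoming weight of neuron `y` given the set `S` of currently activated
(output and auxiliary) neurons and the input symbol `σ`. -/
noncomputable def PNN.inWeight (N : PNN I O A) (S : Finset (O ⊕ A)) (σ : Finset I)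
    (y : O ⊕ A) : ℝ :=
  (∑ i ∈ σ, N.W (Sum.inl i) y) + ∑ a : A, if Sum.inr a ∈ S then N.W (Sum.inr a) y else 0

/-- The target set of the transition from source set `S` reading input symbol `σ`:
all neurons whose total incoming weight reaches the firing threshold `1`. -/
noncomputable def PNN.step (N : PNN I O A) (S : Finset (O ⊕ A)) (σ : Finset I) :
    Finset (O ⊕ A) :=
  Finset.univ.filter (fun y => 1 ≤ N.inWeight S σ y)

/-- The set of activated neurons after running `N` on input string `α`, starting from
the empty activation set. -/
noncomputable def PNN.run (N : PNN I O A) (α : List (Finset I)) : Finset (O ⊕ A) :=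
  α.foldl N.step ∅

/-- The output of `N` on input string `α`: the activated output neurons after the run. -/
noncomputable def PNN.out (N : PNN I O A) (α : List (Finset I)) : Finset O :=
  Finset.univ.filter (fun x => Sum.inl x ∈ N.run α)

/-- `Embeds α β` : the pattern `β` occurs, symbolwise as subsets, at the end of `α`. -/
def Embeds {I : Type} (α β : List (Finset I)) : Prop :=
  ∃ γ, γ <:+ α ∧ List.Forall₂ (· ⊆ ·) β γ


lemma embeds_single {I : Type} {τ σ : Finset I} (h : Embeds [τ] [σ]) : σ ⊆ τ := by
  obtain ⟨γ, hsuf, hf⟩ := h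
  cases hf with
  | cons h1 h2 =>
    cases h2
    obtain ⟨t, ht⟩ := hsuf
    cases t with
    | nil => simp_all
    | cons a t' => simp at ht

lemma mem_out_single (N : PNN I O A) (σ : Finset I) (x : O) :
    x ∈ N.out [σ] ↔ 1 ≤ ∑ i ∈ σ, N.W (Sum.inl i) (Sum.inl x) := by
  simp [PNN.out, PNN.run, PNN.step, PNN.inWeight]

/-- Let `I` be partitioned into disjoint sets `σ₁`, `σ₂`, each of size at least two, and
let `B` be the monotone-regular behavior with single output neuron defined by the founded
regular language `{⟨σ₁⟩, ⟨σ₂⟩}`. Then no positive neural network implements `B` with zero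
delay. -/
theorem stmt_11 [DecidableEq I] (σ₁ σ₂ : Finset I)
    (hdisj : Disjoint σ₁ σ₂) (hunion : σ₁ ∪ σ₂ = Finset.univ)
    (h1 : 2 ≤ σ₁.card) (h2 : 2 ≤ σ₂.card)
    (hO : Fintype.card O = 1)
    (N : PNN I O A) :
    ¬ ∀ α : List (Finset I), α ≠ [] →
        N.out α = if Embeds α [σ₁] ∨ Embeds α [σ₂] then Finset.univ else ∅ := by
  intro h
  obtain ⟨x, -⟩ := Fintype.card_eq_one_iff.mp hO
  obtain ⟨y, hy⟩ := Finset.card_pos.mp (by omega : 0 < σ₁.card)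
  obtain ⟨z, hz⟩ := Finset.card_pos.mp (by omega : 0 < σ₂.card)
  have hyz : y ≠ z := fun e => (Finset.disjoint_left.mp hdisj hy) (e ▸ hz)
  have hzσ₁ : z ∉ σ₁ := fun hzz => Finset.disjoint_left.mp hdisj hzz hz
  have hyσ₂ : y ∉ σ₂ := fun hyy => Finset.disjoint_left.mp hdisj hy hyy
  -- sums over σ₁ and σ₂ reach threshold
  have hs1 : 1 ≤ ∑ i ∈ σ₁, N.W (Sum.inl i) (Sum.inl x) := by
    have he : Embeds [σ₁] [σ₁] := ⟨[σ₁], List.suffix_refl _, .cons (subset_refl _) .nil⟩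
    have := h [σ₁] (by simp)
    rw [if_pos (Or.inl he)] at this
    exact (mem_out_single N σ₁ x).mp (this ▸ Finset.mem_univ x)
  have hs2 : 1 ≤ ∑ i ∈ σ₂, N.W (Sum.inl i) (Sum.inl x) := by
    have he : Embeds [σ₂] [σ₂] := ⟨[σ₂], List.suffix_refl _, .cons (subset_refl _) .nil⟩
    have := h [σ₂] (by simp)
    rw [if_pos (Or.inr he)] at this
    exact (mem_out_single N σ₂ x).mp (this ▸ Finset.mem_univ x)
  by_cases hc : 1 ≤ N.W (Sum.inl y) (Sum.inl x) + N.W (Sum.inl z) (Sum.inl x)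
  · -- input {y, z}
    set τ : Finset I := {y, z} with hτ
    have hne1 : ¬ Embeds [τ] [σ₁] := by
      intro he
      have hsub := embeds_single he
      have : σ₁ ⊆ {y} := (Finset.subset_erase.mpr ⟨by
        simpa [Finset.erase_insert_eq_erase] using hsub, hzσ₁⟩).trans (by
          rw [hτ]
          intro a ha
          rcases Finset.mem_erase.mp ha with ⟨haz, hm⟩
          simp at hm ⊢
          tauto)
      have := Finset.card_le_card this
      simp at this; omega
    have hne2 : ¬ Embeds [τ] [σ₂] := by
      intro he
      have hsub := embeds_single he
      have : σ₂ ⊆ {z} := by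
        intro a ha
        have := hsub ha
        simp [hτ] at this ⊢
        rcases this with rfl | rfl
        · exact absurd ha hyσ₂
        · rfl
      have := Finset.card_le_card this
      simp at this; omega
    have := h [τ] (by simp)
    rw [if_neg (by tauto)] at this
    have hx : x ∈ N.out [τ] := (mem_out_single N τ x).mpr (by
      rw [hτ, Finset.sum_pair hyz]; exact hc)
    rw [this] at hx
    exact absurd hx (Finset.notMem_empty x)
  · push_neg at hc
    set τ : Finset I := σ₁.erase y ∪ σ₂.erase z with hτ
    have hdisj' : Disjoint (σ₁.erase y) (σ₂.erase z) :=
      (hdisj.mono (Finset.erase_subset _ _) (Finset.erase_subset _ _))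
    have hsum : 1 ≤ ∑ i ∈ τ, N.W (Sum.inl i) (Sum.inl x) := by
      rw [hτ, Finset.sum_union hdisj']
      have e1 := Finset.sum_erase_add σ₁ (fun i => N.W (Sum.inl i) (Sum.inl x)) hy
      have e2 := Finset.sum_erase_add σ₂ (fun i => N.W (Sum.inl i) (Sum.inl x)) hz
      linarith
    have hyτ : y ∉ τ := by
      simp [hτ]
      exact fun _ => hyσ₂
    have hzτ : z ∉ τ := by
      simp [hτ]
      exact fun _ => hzσ₁
    have hne1 : ¬ Embeds [τ] [σ₁] := fun he => hyτ (embeds_single he hy)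
    have hne2 : ¬ Embeds [τ] [σ₂] := fun he => hzτ (embeds_single he hz)
    have := h [τ] (by simp)
    rw [if_neg (by tauto)] at this
    have hx : x ∈ N.out [τ] := (mem_out_single N τ x).mpr hsum
    rw [this] at hx
    exact absurd hx (Finset.notMem_empty x)
end

section
/- Let σ₁,σ₂,σ₃,σ₄ be nonempty pairwise disjoint sets of input neurons, I their union, and B the monotone-regular behavior with single output x defined by the language L = {⟨σ₁,σ₂⟩, ⟨σ₃,σ₄⟩} (x ∈ B(α) iff α embeds ⟨σ₁,σ₂⟩ or ⟨σ₃,σ₄⟩). Then no positive neural network implements B with zero delay. -/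
open scoped Classical

variable {I O A : Type} [Fintype I] [Fintype O] [Fintype A]

lemma embeds_pair {I : Type} {a b c d : Finset I} (h : Embeds [a, b] [c, d]) :
    c ⊆ a ∧ d ⊆ b := by
  obtain ⟨γ, hsuf, hf⟩ := h
  have hlen : γ.length = 2 := by simpa using hf.length_eq.symm
  have : γ = [a, b] := hsuf.eq_of_length (by simpa using hlen)
  subst this
  rcases hf with _ | ⟨h1, hf⟩
  rcases hf with _ | ⟨h2, _⟩
  exact ⟨h1, h2⟩

lemma embeds_self {I : Type} (a b : Finset I) : Embeds [a, b] [a, b] :=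
  ⟨[a, b], List.suffix_refl _,
    List.Forall₂.cons (subset_refl _) (List.Forall₂.cons (subset_refl _) List.Forall₂.nil)⟩

/-- Let `σ₁, σ₂, σ₃, σ₄` be nonempty pairwise disjoint sets of input neurons covering `I`,
and let `B` be the monotone-regular behavior with single output neuron defined by the
founded regular language `{⟨σ₁,σ₂⟩, ⟨σ₃,σ₄⟩}`. Then no positive neural network implements
`B` with zero delay. -/
theorem stmt_13 [DecidableEq I] (σ₁ σ₂ σ₃ σ₄ : Finset I)
    (hne₁ : σ₁.Nonempty) (hne₂ : σ₂.Nonempty) (hne₃ : σ₃.Nonempty) (hne₄ : σ₄.Nonempty)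
    (hdisj : Pairwise fun i j => Disjoint (![σ₁, σ₂, σ₃, σ₄] i) (![σ₁, σ₂, σ₃, σ₄] j))
    (hunion : σ₁ ∪ σ₂ ∪ σ₃ ∪ σ₄ = Finset.univ)
    (hO : Fintype.card O = 1)
    (N : PNN I O A) :
    ¬ ∀ α : List (Finset I), α ≠ [] →
        N.out α = if Embeds α [σ₁, σ₂] ∨ Embeds α [σ₃, σ₄] then Finset.univ else ∅ := by
  intro h
  obtain ⟨x, hx⟩ := Fintype.card_eq_one_iff.mp hO
  have d13 : Disjoint σ₁ σ₃ := by simpa using hdisj (show (0 : Fin 4) ≠ 2 by decide)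
  have d24 : Disjoint σ₂ σ₄ := by simpa using hdisj (show (1 : Fin 4) ≠ 3 by decide)
  have nsub13 : ¬ σ₁ ⊆ σ₃ := fun hs => by
    obtain ⟨i, hi⟩ := hne₁; exact Finset.disjoint_left.mp d13 hi (hs hi)
  have nsub31 : ¬ σ₃ ⊆ σ₁ := fun hs => by
    obtain ⟨i, hi⟩ := hne₃; exact Finset.disjoint_left.mp d13 (hs hi) hi
  have nsub24 : ¬ σ₂ ⊆ σ₄ := fun hs => by
    obtain ⟨i, hi⟩ := hne₂; exact Finset.disjoint_left.mp d24 hi (hs hi)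
  have nsub42 : ¬ σ₄ ⊆ σ₂ := fun hs => by
    obtain ⟨i, hi⟩ := hne₄; exact Finset.disjoint_left.mp d24 (hs hi) hi
  set A1 := N.step ∅ σ₁ with hA1
  set A3 := N.step ∅ σ₃ with hA3
  have mem_out : ∀ (a b : Finset I) (S : Finset (O ⊕ A)), S = N.step ∅ a →
      (x ∈ N.out [a, b] ↔ 1 ≤ N.inWeight S b (Sum.inl x)) := by
    intro a b S hS
    simp [PNN.out, PNN.run, PNN.step, hS]
  -- x fires on [σ₁,σ₂] and [σ₃,σ₄]
  have h12 := h [σ₁, σ₂] (by simp)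
  have h34 := h [σ₃, σ₄] (by simp)
  have h14 := h [σ₁, σ₄] (by simp)
  have h32 := h [σ₃, σ₂] (by simp)
  rw [if_pos (Or.inl (embeds_self σ₁ σ₂))] at h12
  rw [if_pos (Or.inr (embeds_self σ₃ σ₄))] at h34
  rw [if_neg ?ne14] at h14
  case ne14 =>
    rintro (he | he)
    · exact nsub24 (embeds_pair he).2
    · exact nsub31 (embeds_pair he).1
  rw [if_neg ?ne32] at h32
  case ne32 =>
    rintro (he | he)
    · exact nsub13 (embeds_pair he).1
    · exact nsub42 (embeds_pair he).2
  have w12 : 1 ≤ N.inWeight A1 σ₂ (Sum.inl x) := by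
    rw [← mem_out σ₁ σ₂ A1 hA1, h12]; exact Finset.mem_univ x
  have w34 : 1 ≤ N.inWeight A3 σ₄ (Sum.inl x) := by
    rw [← mem_out σ₃ σ₄ A3 hA3, h34]; exact Finset.mem_univ x
  have w14 : ¬ 1 ≤ N.inWeight A1 σ₄ (Sum.inl x) := by
    rw [← mem_out σ₁ σ₄ A1 hA1, h14]; simp
  have w32 : ¬ 1 ≤ N.inWeight A3 σ₂ (Sum.inl x) := by
    rw [← mem_out σ₃ σ₂ A3 hA3, h32]; simp
  have key : N.inWeight A1 σ₂ (Sum.inl x) + N.inWeight A3 σ₄ (Sum.inl x) =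
      N.inWeight A1 σ₄ (Sum.inl x) + N.inWeight A3 σ₂ (Sum.inl x) := by
    simp only [PNN.inWeight]; ring
  push_neg at w14 w32
  linarith
end
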